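/- For (a,b,c) ∈ k³ \ {(0,0,0)}, the left Λ-module M(a,b,c) is torsionless if and only if either a ≠ 0 and a + q⁻¹b ≠ 0, or a = 0 and bc = 0. -/

import Mathlib

open CategoryTheory Limits Opposite

/-- The algebra `Λ = Λ(q)` of Ringel–Zhang: a `k`-algebra with distinguished elements
`x, y, z` satisfying the defining relations
`x² = y² = z² = 0`, `yz = 0`, `xy + q·yx = 0`, `xz = zx`, `zy = zx`,
and admitting the `k`-basis `{1, x, y, z, yx, zx}`.
Any such algebra is canonically isomorphic to the quotient of the free algebra
`k⟨x,y,z⟩` by the two-sided ideal generated by these relations. -/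
structure LambdaAlg (k : Type) [Field k] (q : k) (Λ : Type) [Ring Λ] [Algebra k Λ] :
    Type where
  x : Λ
  y : Λ
  z : Λ
  hxx : x * x = 0
  hyy : y * y = 0
  hzz : z * z = 0
  hyz : y * z = 0
  hxy : x * y + q • (y * x) = 0
  hxz : x * z - z * x = 0
  hzy : z * y - z * x = 0
  basis : Module.Basis (Fin 6) k Λ
  hb0 : basis 0 = 1
  hb1 : basis 1 = x
  hb2 : basis 2 = y
  hb3 : basis 3 = z
  hb4 : basis 4 = y * x
  hb5 : basis 5 = z * x

namespace LambdaAlg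

variable {k : Type} [Field k] {q : k} {Λ : Type} [Ring Λ] [Algebra k Λ]

/-- The element `ax + by + cz` of `Λ`. -/
def w (D : LambdaAlg k q Λ) (a b c : k) : Λ := a • D.x + b • D.y + c • D.z

/-- The left ideal `U(a,b,c) = Λ(ax+by+cz) + Λ·yx + Λ·zx` of `Λ`. -/
def U (D : LambdaAlg k q Λ) (a b c : k) : Submodule Λ Λ :=
  Submodule.span Λ {D.w a b c, D.y * D.x, D.z * D.x}

/-- The left `Λ`-module `M(a,b,c) = Λ/U(a,b,c)`. -/
abbrev M (D : LambdaAlg k q Λ) (a b c : k) : Type := Λ ⧸ D.U a b c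

/-- The right ideal `U′(a,b,c) = (ax+by+cz)Λ + yx·Λ + zx·Λ` of `Λ`,
viewed as a `Λᵐᵒᵖ`-submodule of `Λ`. -/
def U' (D : LambdaAlg k q Λ) (a b c : k) : Submodule Λᵐᵒᵖ Λ :=
  Submodule.span Λᵐᵒᵖ {D.w a b c, D.y * D.x, D.z * D.x}

/-- The right `Λ`-module `M′(a,b,c) = Λ/U′(a,b,c)` (a module over `Λᵐᵒᵖ`). -/
abbrev M' (D : LambdaAlg k q Λ) (a b c : k) : Type := Λ ⧸ D.U' a b c

/-- The `k`-subspace `{m ∈ M : x·m = y·m = z·m = 0}` of a left `Λ`-module `M`;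
since `x, y, z` generate `rad Λ` and every simple `Λ`-module is isomorphic to `k`,
this is the socle of `M`. -/
def ann (D : LambdaAlg k q Λ) (M : Type) [AddCommGroup M] [Module k M] [Module Λ M]
    [IsScalarTower k Λ M] : Submodule k M where
  carrier := {m | D.x • m = 0 ∧ D.y • m = 0 ∧ D.z • m = 0}
  add_mem' := by
    rintro a b ⟨h1, h2, h3⟩ ⟨g1, g2, g3⟩
    simp [smul_add, h1, h2, h3, g1, g2, g3]
  zero_mem' := by simp
  smul_mem' := by
    rintro a m ⟨h1, h2, h3⟩
    refine ⟨?_, ?_, ?_⟩ <;> rw [smul_comm] <;> simp [h1, h2, h3]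

/-- The submodule `(rad Λ)·M = x·M + y·M + z·M` of a left `Λ`-module `M`. -/
def radM (D : LambdaAlg k q Λ) (M : Type) [AddCommGroup M] [Module Λ M] :
    Submodule Λ M :=
  Submodule.span Λ
    (Set.range (fun m : M => D.x • m) ∪ Set.range (fun m : M => D.y • m) ∪
      Set.range (fun m : M => D.z • m))

end LambdaAlg

/-- A module is indecomposable if it is nonzero and is not the direct sum of two
nonzero submodules. -/
def IsIndecomposable (R : Type) [Ring R] (M : Type) [AddCommGroup M] [Module R M] :
    Prop :=
  Nontrivial M ∧
    ∀ N₁ N₂ : Submodule R M, N₁ ⊓ N₂ = ⊥ → N₁ ⊔ N₂ = ⊤ → N₁ = ⊥ ∨ N₂ = ⊥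

/-- A module is torsionless if it admits an injective linear map into a finite free
module. -/
def IsTorsionless (R : Type) [Ring R] (M : Type) [AddCommGroup M] [Module R M] : Prop :=
  ∃ (n : ℕ) (f : M →ₗ[R] (Fin n → R)), Function.Injective f

/-- The canonical evaluation map `M → M** = Hom_{Λᵒᵖ}(Hom_Λ(M, Λ), Λ)`,
sending `m` to `f ↦ f m`. -/
def evalMap (Λ : Type) [Ring Λ] (M : Type) [AddCommGroup M] [Module Λ M] :
    M → ((M →ₗ[Λ] Λ) →ₗ[Λᵐᵒᵖ] Λ) := fun m =>
  { toFun := fun f => f m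
    map_add' := fun _ _ => rfl
    map_smul' := fun _ _ => rfl }

/-- The transformation `ω′(a,b,c) = (a, q⁻¹b, −((a+q⁻¹b)/a)·c)` on triples. -/
def omegaPrime {k : Type} [Field k] (q : k) (t : k × k × k) : k × k × k :=
  (t.1, q⁻¹ * t.2.1, -((t.1 + q⁻¹ * t.2.1) / t.1) * t.2.2)

namespace LambdaAlg

variable {k : Type} [Field k] {q : k} {Λ : Type} [Ring Λ] [Algebra k Λ]

section Aux
variable (D : LambdaAlg k q Λ)

lemma xyE : D.x * D.y = -(q • (D.y * D.x)) := eq_neg_of_add_eq_zero_left D.hxy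
lemma xzE : D.x * D.z = D.z * D.x := sub_eq_zero.mp D.hxz
lemma zyE : D.z * D.y = D.z * D.x := sub_eq_zero.mp D.hzy

lemma x_yx : D.x * (D.y * D.x) = 0 := by
  rw [← mul_assoc, D.xyE, neg_mul, smul_mul_assoc, mul_assoc, D.hxx, mul_zero, smul_zero, neg_zero]
lemma y_yx : D.y * (D.y * D.x) = 0 := by rw [← mul_assoc, D.hyy, zero_mul]
lemma z_yx : D.z * (D.y * D.x) = 0 := by
  rw [← mul_assoc, D.zyE, mul_assoc, D.hxx, mul_zero]
lemma x_zx : D.x * (D.z * D.x) = 0 := by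
  rw [← mul_assoc, D.xzE, mul_assoc, D.hxx, mul_zero]
lemma y_zx : D.y * (D.z * D.x) = 0 := by rw [← mul_assoc, D.hyz, zero_mul]
lemma z_zx : D.z * (D.z * D.x) = 0 := by rw [← mul_assoc, D.hzz, zero_mul]
lemma yx_x : (D.y * D.x) * D.x = 0 := by rw [mul_assoc, D.hxx, mul_zero]
lemma zx_x : (D.z * D.x) * D.x = 0 := by rw [mul_assoc, D.hxx, mul_zero]
lemma yx_y : (D.y * D.x) * D.y = 0 := by
  rw [mul_assoc, D.xyE, mul_neg, mul_smul_comm, ← mul_assoc, D.hyy, zero_mul, smul_zero, neg_zero]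
lemma zx_y : (D.z * D.x) * D.y = 0 := by
  rw [mul_assoc, D.xyE, mul_neg, mul_smul_comm, D.z_yx, smul_zero, neg_zero]
lemma yx_z : (D.y * D.x) * D.z = 0 := by rw [mul_assoc, D.xzE, D.y_zx]
lemma zx_z : (D.z * D.x) * D.z = 0 := by rw [mul_assoc, D.xzE, D.z_zx]
lemma yx_yx : (D.y * D.x) * (D.y * D.x) = 0 := by rw [← mul_assoc, D.yx_y, zero_mul]
lemma yx_zx : (D.y * D.x) * (D.z * D.x) = 0 := by rw [← mul_assoc, D.yx_z, zero_mul]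
lemma zx_yx : (D.z * D.x) * (D.y * D.x) = 0 := by rw [← mul_assoc, D.zx_y, zero_mul]
lemma zx_zx : (D.z * D.x) * (D.z * D.x) = 0 := by rw [← mul_assoc, D.zx_z, zero_mul]

variable (r0 r1 r2 r3 r4 r5 : k)

/-- The generic element with coordinates `r0,…,r5`. -/
noncomputable abbrev gen : Λ :=
  r0 • (1 : Λ) + r1 • D.x + r2 • D.y + r3 • D.z + r4 • (D.y * D.x) + r5 • (D.z * D.x)

lemma mul_x_e : D.gen r0 r1 r2 r3 r4 r5 * D.x
    = r0 • D.x + r2 • (D.y * D.x) + r3 • (D.z * D.x) := by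
  simp only [gen, add_mul, smul_mul_assoc, one_mul, D.hxx, D.yx_x, D.zx_x, smul_zero]
  module

lemma mul_y_e : D.gen r0 r1 r2 r3 r4 r5 * D.y
    = r0 • D.y + (-(q * r1)) • (D.y * D.x) + r3 • (D.z * D.x) := by
  simp only [gen, add_mul, smul_mul_assoc, one_mul, D.xyE, D.hyy, D.zyE, D.yx_y, D.zx_y,
    smul_zero]
  module

lemma mul_z_e : D.gen r0 r1 r2 r3 r4 r5 * D.z = r0 • D.z + r1 • (D.z * D.x) := by
  simp only [gen, add_mul, smul_mul_assoc, one_mul, D.xzE, D.hyz, D.hzz, D.yx_z, D.zx_z,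
    smul_zero]
  module

lemma mul_yx_e : D.gen r0 r1 r2 r3 r4 r5 * (D.y * D.x) = r0 • (D.y * D.x) := by
  simp only [gen, add_mul, smul_mul_assoc, one_mul, D.x_yx, D.y_yx, D.z_yx, D.yx_yx, D.zx_yx,
    smul_zero]
  module

lemma mul_zx_e : D.gen r0 r1 r2 r3 r4 r5 * (D.z * D.x) = r0 • (D.z * D.x) := by
  simp only [gen, add_mul, smul_mul_assoc, one_mul, D.x_zx, D.y_zx, D.z_zx, D.yx_zx, D.zx_zx,
    smul_zero]
  module

lemma x_mul_e : D.x * D.gen r0 r1 r2 r3 r4 r5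
    = r0 • D.x + (-(q * r2)) • (D.y * D.x) + r3 • (D.z * D.x) := by
  simp only [gen, mul_add, mul_smul_comm, mul_one, D.hxx, D.xyE, D.xzE, D.x_yx, D.x_zx, smul_zero]
  module

lemma y_mul_e : D.y * D.gen r0 r1 r2 r3 r4 r5 = r0 • D.y + r1 • (D.y * D.x) := by
  simp only [gen, mul_add, mul_smul_comm, mul_one, D.hyy, D.hyz, D.y_yx, D.y_zx, smul_zero]
  module

lemma z_mul_e : D.z * D.gen r0 r1 r2 r3 r4 r5 = r0 • D.z + (r1 + r2) • (D.z * D.x) := by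
  simp only [gen, mul_add, mul_smul_comm, mul_one, D.zyE, D.hzz, D.z_yx, D.z_zx, smul_zero]
  module

lemma yx_mul_e : (D.y * D.x) * D.gen r0 r1 r2 r3 r4 r5 = r0 • (D.y * D.x) := by
  simp only [gen, mul_add, mul_smul_comm, mul_one, D.yx_x, D.yx_y, D.yx_z, D.yx_yx, D.yx_zx,
    smul_zero]
  module

lemma zx_mul_e : (D.z * D.x) * D.gen r0 r1 r2 r3 r4 r5 = r0 • (D.z * D.x) := by
  simp only [gen, mul_add, mul_smul_comm, mul_one, D.zx_x, D.zx_y, D.zx_z, D.zx_yx, D.zx_zx,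
    smul_zero]
  module

lemma w_mul_e (a b c : k) : D.w a b c * D.gen r0 r1 r2 r3 r4 r5
    = r0 • D.w a b c + (b * r1 - q * (a * r2)) • (D.y * D.x)
      + (a * r3 + c * r1 + c * r2) • (D.z * D.x) := by
  simp only [w, add_mul, smul_mul_assoc, D.x_mul_e, D.y_mul_e, D.z_mul_e]
  module

lemma mul_w_e (a b c : k) : D.gen r0 r1 r2 r3 r4 r5 * D.w a b c
    = r0 • D.w a b c + (a * r2 - q * (b * r1)) • (D.y * D.x)
      + (c * r1 + a * r3 + b * r3) • (D.z * D.x) := by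
  simp only [w, mul_add, mul_smul_comm, D.mul_x_e, D.mul_y_e, D.mul_z_e]
  module

lemma indep (h : D.gen r0 r1 r2 r3 r4 r5 = 0) :
    r0 = 0 ∧ r1 = 0 ∧ r2 = 0 ∧ r3 = 0 ∧ r4 = 0 ∧ r5 = 0 := by
  have li := D.basis.linearIndependent
  rw [Fintype.linearIndependent_iff] at li
  have key := li ![r0, r1, r2, r3, r4, r5] (by
    rw [Fin.sum_univ_six]
    simpa [D.hb0, D.hb1, D.hb2, D.hb3, D.hb4, D.hb5] using h)
  exact ⟨key 0, key 1, key 2, key 3, key 4, key 5⟩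

lemma soc_indep (t u : k) (h : t • (D.y * D.x) + u • (D.z * D.x) = 0) : t = 0 ∧ u = 0 := by
  have := D.indep 0 0 0 0 t u (by simpa [gen] using h)
  exact ⟨this.2.2.2.2.1, this.2.2.2.2.2⟩

lemma expand (m : Λ) : ∃ r0 r1 r2 r3 r4 r5 : k, m = D.gen r0 r1 r2 r3 r4 r5 := by
  refine ⟨D.basis.repr m 0, D.basis.repr m 1, D.basis.repr m 2, D.basis.repr m 3,
    D.basis.repr m 4, D.basis.repr m 5, ?_⟩
  have h := D.basis.sum_repr m
  rw [Fin.sum_univ_six, D.hb0, D.hb1, D.hb2, D.hb3, D.hb4, D.hb5] at h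
  exact h.symm

lemma w_mem (a b c : k) : D.w a b c ∈ D.U a b c :=
  Submodule.subset_span (by simp)
lemma yx_mem (a b c : k) : D.y * D.x ∈ D.U a b c :=
  Submodule.subset_span (by simp)
lemma zx_mem (a b c : k) : D.z * D.x ∈ D.U a b c :=
  Submodule.subset_span (by simp)

lemma smul_mem_U {a b c : k} (s : k) {m : Λ} (hm : m ∈ D.U a b c) : s • m ∈ D.U a b c := by
  rw [Algebra.smul_def, ← smul_eq_mul]
  exact Submodule.smul_mem _ _ hm

lemma mem_U_iff (a b c : k) (m : Λ) :
    m ∈ D.U a b c ↔ ∃ s t u : k,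
      m = s • D.w a b c + t • (D.y * D.x) + u • (D.z * D.x) := by
  constructor
  · intro hm
    induction hm using Submodule.span_induction with
    | mem v hv =>
      rcases hv with h | h | h
      · exact ⟨1, 0, 0, by simp [h]⟩
      · exact ⟨0, 1, 0, by simp [h]⟩
      · exact ⟨0, 0, 1, by simp [Set.mem_singleton_iff.mp h]⟩
    | zero => exact ⟨0, 0, 0, by simp⟩
    | add v v' _ _ ih ih' =>
      obtain ⟨s, t, u, rfl⟩ := ih
      obtain ⟨s', t', u', rfl⟩ := ih'
      exact ⟨s + s', t + t', u + u', by module⟩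
    | smul l v _ ih =>
      obtain ⟨s, t, u, rfl⟩ := ih
      obtain ⟨r0, r1, r2, r3, r4, r5, rfl⟩ := D.expand l
      refine ⟨s * r0, s * (a * r2 - q * (b * r1)) + t * r0,
        s * (c * r1 + a * r3 + b * r3) + u * r0, ?_⟩
      rw [smul_eq_mul, mul_add, mul_add, mul_smul_comm, mul_smul_comm, mul_smul_comm,
        D.mul_w_e, D.mul_yx_e, D.mul_zx_e]
      module
  · rintro ⟨s, t, u, rfl⟩
    exact Submodule.add_mem _
      (Submodule.add_mem _ (D.smul_mem_U s (D.w_mem a b c)) (D.smul_mem_U t (D.yx_mem a b c)))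
      (D.smul_mem_U u (D.zx_mem a b c))

lemma w_mul_yx (a b c : k) : D.w a b c * (D.y * D.x) = 0 := by
  simp [w, add_mul, smul_mul_assoc, D.x_yx, D.y_yx, D.z_yx]

lemma w_mul_zx (a b c : k) : D.w a b c * (D.z * D.x) = 0 := by
  simp [w, add_mul, smul_mul_assoc, D.x_zx, D.y_zx, D.z_zx]

lemma w_mul_xyz (a b c s1 s2 s3 : k) :
    D.w a b c * (s1 • D.x + s2 • D.y + s3 • D.z)
      = (b * s1 - q * (a * s2)) • (D.y * D.x) + (a * s3 + c * s1 + c * s2) • (D.z * D.x) := by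
  have h := D.w_mul_e 0 s1 s2 s3 0 0 a b c
  simp only [gen, zero_smul, zero_add, add_zero] at h
  rw [h]

lemma mul_xyz_e (s1 s2 s3 : k) :
    D.gen r0 r1 r2 r3 r4 r5 * (s1 • D.x + s2 • D.y + s3 • D.z)
      = r0 • (s1 • D.x + s2 • D.y + s3 • D.z)
        + (s1 * r2 - q * (s2 * r1)) • (D.y * D.x)
        + (s1 * r3 + s2 * r3 + s3 * r1) • (D.z * D.x) := by
  rw [mul_add, mul_add, mul_smul_comm, mul_smul_comm, mul_smul_comm,
    D.mul_x_e, D.mul_y_e, D.mul_z_e]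
  module

lemma yx_mul_xyz (s1 s2 s3 : k) :
    (D.y * D.x) * (s1 • D.x + s2 • D.y + s3 • D.z) = 0 := by
  simp [mul_add, mul_smul_comm, D.yx_x, D.yx_y, D.yx_z]

lemma zx_mul_xyz (s1 s2 s3 : k) :
    (D.z * D.x) * (s1 • D.x + s2 • D.y + s3 • D.z) = 0 := by
  simp [mul_add, mul_smul_comm, D.zx_x, D.zx_y, D.zx_z]

end Aux

section Main

variable (D : LambdaAlg k q Λ)

/-- Abstract positive criterion: three annihilating elements that jointly detect `U`. -/
lemma torsionless_of (a b c : k) (l1 l2 l3 : Λ)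
    (h1 : ∀ m ∈ D.U a b c, m * l1 = 0)
    (h2 : ∀ m ∈ D.U a b c, m * l2 = 0)
    (h3 : ∀ m ∈ D.U a b c, m * l3 = 0)
    (hdet : ∀ m : Λ, m * l1 = 0 → m * l2 = 0 → m * l3 = 0 → m ∈ D.U a b c) :
    IsTorsionless Λ (D.M a b c) := by
  have mkg : ∀ l : Λ, (∀ m ∈ D.U a b c, m * l = 0) →
      ∃ g : D.M a b c →ₗ[Λ] Λ, ∀ m : Λ, g (Submodule.Quotient.mk m) = m * l := by
    intro l hl
    refine ⟨Submodule.liftQ _ (LinearMap.toSpanSingleton Λ Λ l) ?_, ?_⟩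
    · intro m hm
      rw [LinearMap.mem_ker, LinearMap.toSpanSingleton_apply, smul_eq_mul]
      exact hl m hm
    · intro m
      rw [Submodule.liftQ_apply, LinearMap.toSpanSingleton_apply, smul_eq_mul]
  obtain ⟨g1, hg1⟩ := mkg l1 h1
  obtain ⟨g2, hg2⟩ := mkg l2 h2
  obtain ⟨g3, hg3⟩ := mkg l3 h3
  refine ⟨3, LinearMap.pi ![g1, g2, g3], ?_⟩
  rw [← LinearMap.ker_eq_bot, Submodule.eq_bot_iff]
  intro p hp
  obtain ⟨m, rfl⟩ := Submodule.Quotient.mk_surjective _ p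
  rw [LinearMap.mem_ker] at hp
  have e1 : m * l1 = 0 := by
    have := congrFun hp 0
    simpa [LinearMap.pi_apply, hg1] using this
  have e2 : m * l2 = 0 := by
    have := congrFun hp 1
    simpa [LinearMap.pi_apply, hg2] using this
  have e3 : m * l3 = 0 := by
    have := congrFun hp 2
    simpa [LinearMap.pi_apply, hg3] using this
  rw [Submodule.Quotient.mk_eq_zero]
  exact hdet m e1 e2 e3

/-- Abstract negative criterion: an element outside `U` killed by the right annihilator. -/
lemma not_torsionless_of (a b c : k) (m : Λ) (hm : m ∉ D.U a b c)
    (hkill : ∀ l : Λ, D.w a b c * l = 0 → (D.y * D.x) * l = 0 → (D.z * D.x) * l = 0 →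
      m * l = 0) :
    ¬ IsTorsionless Λ (D.M a b c) := by
  rintro ⟨n, f, hf⟩
  have hz : f (Submodule.Quotient.mk m) = 0 := by
    funext i
    set g := (LinearMap.proj i).comp f with hgdef
    have gmk : ∀ u : Λ, g (Submodule.Quotient.mk u) = u * g (Submodule.Quotient.mk 1) := by
      intro u
      have : (Submodule.Quotient.mk u : D.M a b c) = u • Submodule.Quotient.mk 1 := by
        rw [← Submodule.Quotient.mk_smul, smul_eq_mul, mul_one]
      rw [this, map_smul, smul_eq_mul]
    have gU : ∀ u : Λ, u ∈ D.U a b c → u * g (Submodule.Quotient.mk 1) = 0 := by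
      intro u hu
      rw [← gmk, (Submodule.Quotient.mk_eq_zero _).mpr hu, map_zero]
    have key := hkill (g (Submodule.Quotient.mk 1))
      (gU _ (D.w_mem a b c)) (gU _ (D.yx_mem a b c)) (gU _ (D.zx_mem a b c))
    have : g (Submodule.Quotient.mk m) = 0 := by rw [gmk]; exact key
    simpa [hgdef] using this
  have : (Submodule.Quotient.mk m : D.M a b c) = 0 := hf (by rw [hz, map_zero])
  exact hm ((Submodule.Quotient.mk_eq_zero _).mp this)

end Main

end LambdaAlg

namespace LambdaAlg

variable {k : Type} [Field k] {q : k} {Λ : Type} [Ring Λ] [Algebra k Λ]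
variable (D : LambdaAlg k q Λ)

lemma U_mul_yx (a b c : k) : ∀ m ∈ D.U a b c, m * (D.y * D.x) = 0 := by
  intro m hm
  obtain ⟨s, t, u, rfl⟩ := (D.mem_U_iff a b c m).mp hm
  simp [add_mul, smul_mul_assoc, D.w_mul_yx, D.yx_yx, D.zx_yx]

lemma U_mul_xyz (a b c s1 s2 s3 : k) (e1 : b * s1 - q * (a * s2) = 0)
    (e2 : a * s3 + c * s1 + c * s2 = 0) :
    ∀ m ∈ D.U a b c, m * (s1 • D.x + s2 • D.y + s3 • D.z) = 0 := by
  intro m hm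
  obtain ⟨s, t, u, rfl⟩ := (D.mem_U_iff a b c m).mp hm
  simp [add_mul, smul_mul_assoc, D.w_mul_xyz, e1, e2, D.yx_mul_xyz, D.zx_mul_xyz]

lemma posA (hq : q ≠ 0) (a b c : k) (ha : a ≠ 0) (hab : q * a + b ≠ 0) :
    IsTorsionless Λ (D.M a b c) := by
  set s1 := q * a * a with hs1
  set s2 := a * b with hs2
  set s3 := -(c * (q * a + b)) with hs3
  have e1 : b * s1 - q * (a * s2) = 0 := by rw [hs1, hs2]; ring
  have e2 : a * s3 + c * s1 + c * s2 = 0 := by rw [hs1, hs2, hs3]; ring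
  refine D.torsionless_of a b c (D.y * D.x) (s1 • D.x + s2 • D.y + s3 • D.z)
    (s1 • D.x + s2 • D.y + s3 • D.z) (D.U_mul_yx a b c)
    (D.U_mul_xyz a b c s1 s2 s3 e1 e2) (D.U_mul_xyz a b c s1 s2 s3 e1 e2) ?_
  intro m h1 h2 _
  obtain ⟨r0, r1, r2, r3, r4, r5, rfl⟩ := D.expand m
  rw [D.mul_yx_e] at h1
  have hr0 : r0 = 0 := (D.soc_indep r0 0 (by simpa using h1)).1
  rw [D.mul_xyz_e, hr0, zero_smul, zero_add] at h2
  obtain ⟨c1, c2⟩ := D.soc_indep _ _ h2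
  have d1 : q * a * (a * r2 - b * r1) = 0 := by rw [hs1, hs2] at c1; linear_combination c1
  have d2 : (q * a + b) * (a * r3 - c * r1) = 0 := by
    rw [hs1, hs2, hs3] at c2; linear_combination c2
  have d1' : a * r2 - b * r1 = 0 := by
    rcases mul_eq_zero.mp d1 with h | h
    · exact absurd h (mul_ne_zero hq ha)
    · exact h
  have d2' : a * r3 - c * r1 = 0 := by
    rcases mul_eq_zero.mp d2 with h | h
    · exact absurd h hab
    · exact h
  rw [D.mem_U_iff]
  refine ⟨r1 * a⁻¹, r4, r5, ?_⟩
  rw [hr0]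
  simp only [gen, w, zero_smul, zero_add]
  match_scalars
  · field_simp
  · field_simp
    linear_combination d1'
  · field_simp
    linear_combination d2'
  · ring
  · ring

lemma posB (a b c : k) (ha : a = 0) (hc : c = 0) (hb : b ≠ 0) :
    IsTorsionless Λ (D.M a b c) := by
  have e1 : b * 0 - q * (a * 0) = 0 := by ring
  have e2 : a * 1 + c * 0 + c * 0 = 0 := by rw [ha]; ring
  have f1 : b * 0 - q * (a * 1) = 0 := by rw [ha]; ring
  have f2 : a * 0 + c * 0 + c * 1 = 0 := by rw [ha, hc]; ring
  refine D.torsionless_of a b c (D.y * D.x)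
    ((0 : k) • D.x + (0 : k) • D.y + (1 : k) • D.z)
    ((0 : k) • D.x + (1 : k) • D.y + (0 : k) • D.z)
    (D.U_mul_yx a b c) (D.U_mul_xyz a b c 0 0 1 e1 e2) (D.U_mul_xyz a b c 0 1 0 f1 f2) ?_
  intro m h1 h2 h3
  obtain ⟨r0, r1, r2, r3, r4, r5, rfl⟩ := D.expand m
  rw [D.mul_yx_e] at h1
  have hr0 : r0 = 0 := (D.soc_indep r0 0 (by simpa using h1)).1
  rw [D.mul_xyz_e, hr0, zero_smul, zero_add] at h2
  obtain ⟨-, c2⟩ := D.soc_indep _ _ h2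
  have hr1 : r1 = 0 := by linear_combination c2
  rw [D.mul_xyz_e, hr0, zero_smul, zero_add] at h3
  obtain ⟨-, c3⟩ := D.soc_indep _ _ h3
  have hr3 : r3 = 0 := by linear_combination c3
  rw [D.mem_U_iff]
  refine ⟨r2 * b⁻¹, r4, r5, ?_⟩
  rw [hr0, hr1, hr3, ha, hc]
  simp only [gen, w, zero_smul, zero_add, add_zero, smul_zero]
  match_scalars <;> field_simp

lemma posC (a b c : k) (ha : a = 0) (hb : b = 0) (hc : c ≠ 0) :
    IsTorsionless Λ (D.M a b c) := by
  have e1 : b * 0 - q * (a * 0) = 0 := by ring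
  have e2 : a * 1 + c * 0 + c * 0 = 0 := by rw [ha]; ring
  have f1 : b * 1 - q * (a * (-1)) = 0 := by rw [ha, hb]; ring
  have f2 : a * 0 + c * 1 + c * (-1) = 0 := by ring
  refine D.torsionless_of a b c (D.y * D.x)
    ((0 : k) • D.x + (0 : k) • D.y + (1 : k) • D.z)
    ((1 : k) • D.x + (-1 : k) • D.y + (0 : k) • D.z)
    (D.U_mul_yx a b c) (D.U_mul_xyz a b c 0 0 1 e1 e2) (D.U_mul_xyz a b c 1 (-1) 0 f1 f2) ?_
  intro m h1 h2 h3
  obtain ⟨r0, r1, r2, r3, r4, r5, rfl⟩ := D.expand m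
  rw [D.mul_yx_e] at h1
  have hr0 : r0 = 0 := (D.soc_indep r0 0 (by simpa using h1)).1
  rw [D.mul_xyz_e, hr0, zero_smul, zero_add] at h2
  obtain ⟨-, c2⟩ := D.soc_indep _ _ h2
  have hr1 : r1 = 0 := by linear_combination c2
  rw [D.mul_xyz_e, hr0, zero_smul, zero_add] at h3
  obtain ⟨c3, -⟩ := D.soc_indep _ _ h3
  have hr2 : r2 = 0 := by linear_combination c3 - q * hr1
  rw [D.mem_U_iff]
  refine ⟨r3 * c⁻¹, r4, r5, ?_⟩
  rw [hr0, hr1, hr2, ha, hb]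
  simp only [gen, w, zero_smul, zero_add, add_zero, smul_zero]
  match_scalars <;> field_simp

lemma negA (hq : q ≠ 0) (a b c : k) (ha : a ≠ 0) (hab : q * a + b = 0) :
    ¬ IsTorsionless Λ (D.M a b c) := by
  refine D.not_torsionless_of a b c D.z ?_ ?_
  · intro hmem
    obtain ⟨s, t, u, hzeq⟩ := (D.mem_U_iff a b c _).mp hmem
    have h2 : (0 : k) • (1 : Λ) + (s * a) • D.x + (s * b) • D.y + (s * c - 1) • D.z
        + t • (D.y * D.x) + u • (D.z * D.x) = 0 := by
      simp only [w] at hzeq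
      linear_combination (norm := module) -hzeq
    obtain ⟨-, e1, -, e3, -, -⟩ := D.indep 0 (s * a) (s * b) (s * c - 1) t u h2
    have hs : s = 0 := by
      rcases mul_eq_zero.mp e1 with h | h
      · exact h
      · exact absurd h ha
    rw [hs, zero_mul, zero_sub] at e3
    exact absurd (neg_eq_zero.mp e3) one_ne_zero
  · intro l hw h4 _
    obtain ⟨r0, r1, r2, r3, r4, r5, rfl⟩ := D.expand l
    rw [D.yx_mul_e] at h4
    have hr0 : r0 = 0 := (D.soc_indep r0 0 (by simpa using h4)).1
    rw [D.w_mul_e, hr0, zero_smul, zero_add] at hw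
    obtain ⟨e1, -⟩ := D.soc_indep _ _ hw
    have hb' : b = -(q * a) := by linear_combination hab
    rw [hb'] at e1
    have hsum : q * a * (r1 + r2) = 0 := by linear_combination -e1
    have hsum' : r1 + r2 = 0 := by
      rcases mul_eq_zero.mp hsum with h | h
      · exact absurd h (mul_ne_zero hq ha)
      · exact h
    rw [D.z_mul_e, hr0, hsum', zero_smul, zero_smul, add_zero]

lemma negB (a b c : k) (ha : a = 0) (hb : b ≠ 0) (hc : c ≠ 0) :
    ¬ IsTorsionless Λ (D.M a b c) := by
  refine D.not_torsionless_of a b c D.y ?_ ?_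
  · intro hmem
    obtain ⟨s, t, u, hyeq⟩ := (D.mem_U_iff a b c _).mp hmem
    have h2 : (0 : k) • (1 : Λ) + (s * a) • D.x + (s * b - 1) • D.y + (s * c) • D.z
        + t • (D.y * D.x) + u • (D.z * D.x) = 0 := by
      simp only [w] at hyeq
      linear_combination (norm := module) -hyeq
    obtain ⟨-, -, e2, e3, -, -⟩ := D.indep 0 (s * a) (s * b - 1) (s * c) t u h2
    have hs : s = 0 := by
      rcases mul_eq_zero.mp e3 with h | h
      · exact h
      · exact absurd h hc
    rw [hs, zero_mul, zero_sub] at e2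
    exact absurd (neg_eq_zero.mp e2) one_ne_zero
  · intro l hw h4 _
    obtain ⟨r0, r1, r2, r3, r4, r5, rfl⟩ := D.expand l
    rw [D.yx_mul_e] at h4
    have hr0 : r0 = 0 := (D.soc_indep r0 0 (by simpa using h4)).1
    rw [D.w_mul_e, hr0, zero_smul, zero_add] at hw
    obtain ⟨e1, e2⟩ := D.soc_indep _ _ hw
    rw [ha] at e1 e2
    have hr1 : r1 = 0 := by
      have : b * r1 = 0 := by linear_combination e1
      rcases mul_eq_zero.mp this with h | h
      · exact absurd h hb
      · exact h
    have hr2 : r2 = 0 := by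
      have : c * r2 = 0 := by linear_combination e2 - c * hr1
      rcases mul_eq_zero.mp this with h | h
      · exact absurd h hc
      · exact h
    rw [D.y_mul_e, hr0, hr1, zero_smul, zero_smul, add_zero]

end LambdaAlg

/-- `M(a,b,c)` is torsionless iff either `a ≠ 0` and `a + q⁻¹b ≠ 0`, or `a = 0`
and `bc = 0`. -/
theorem statement11 (k : Type) [Field k] (q : k) (hq : q ≠ 0)
    (Λ : Type) [Ring Λ] [Algebra k Λ] (D : LambdaAlg k q Λ)
    (a b c : k) (h : (a, b, c) ≠ (0, 0, 0)) :
    IsTorsionless Λ (D.M a b c) ↔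
      (a ≠ 0 ∧ a + q⁻¹ * b ≠ 0) ∨ (a = 0 ∧ b * c = 0) := by
  constructor
  · intro ht
    by_contra hcond
    by_cases ha : a = 0
    · have hbc : b * c ≠ 0 := fun hbc => hcond (Or.inr ⟨ha, hbc⟩)
      have hb : b ≠ 0 := fun hb => hbc (by rw [hb, zero_mul])
      have hc : c ≠ 0 := fun hc => hbc (by rw [hc, mul_zero])
      exact D.negB a b c ha hb hc ht
    · have hab : a + q⁻¹ * b = 0 := by
        by_contra hne
        exact hcond (Or.inl ⟨ha, hne⟩)
      have hab' : q * a + b = 0 := by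
        field_simp at hab
        linear_combination hab
      exact D.negA hq a b c ha hab' ht
  · rintro (⟨ha, hab⟩ | ⟨ha, hbc⟩)
    · have hab' : q * a + b ≠ 0 := by
        intro h0
        apply hab
        field_simp
        linear_combination h0
      exact D.posA hq a b c ha hab'
    · by_cases hc : c = 0
      · have hb : b ≠ 0 := by
          intro hb
          exact h (by rw [ha, hb, hc])
        exact D.posB a b c ha hc hb
      · have hb : b = 0 := by
          rcases mul_eq_zero.mp hbc with h' | h'
          · exact h'
          · exact absurd h' hc
        exact D.posC a b c ha hb hc
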